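/- Let W be a standard Brownian motion on [0,1] and c_π := 2^{10}/π². For λ > 0 and n ∈ ℕ₀ let E^n_λ := {∃ s ∈ [0,1] : sup_{t ∈ [s-2^{-n}, s+2^{-n}] ∩ [0,1]} |W(s) - W(t)|/2^{-n} ≤ λ}. Then P(E^n_λ) ≤ c_π·λ⁴·2^{-n}. -/

import Mathlib

open MeasureTheory ProbabilityTheory Set Real
open scoped ENNReal NNReal

/-- A standard (scalar) Brownian motion on a probability space. -/
structure IsBrownianMotion {Ω : Type*} [MeasurableSpace Ω] (P : Measure Ω)
    (W : ℝ → Ω → ℝ) : Prop where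
  meas : ∀ t, Measurable (W t)
  init : ∀ᵐ ω ∂P, W 0 ω = 0
  cont : ∀ᵐ ω ∂P, Continuous fun t => W t ω
  incr_law : ∀ s t : ℝ, s ≤ t →
    Measure.map (fun ω => W t ω - W s ω) P = gaussianReal 0 (Real.toNNReal (t - s))
  indep_incr : ∀ (n : ℕ) (t : ℕ → ℝ), Monotone t →
    iIndepFun
      (fun (i : Fin n) ω => W (t (i + 1)) ω - W (t i) ω) P

lemma gauss_bound (v : ℝ≥0) (hv : v ≠ 0) (a : ℝ) :
    gaussianReal 0 v (Set.Icc (-a) a) ≤ ENNReal.ofReal (2 * a / Real.sqrt (2 * π * v)) := by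
  rw [gaussianReal_apply 0 hv]
  have hb : ∀ x : ℝ, gaussianPDF 0 v x ≤ ENNReal.ofReal ((Real.sqrt (2 * π * v))⁻¹) := by
    intro x
    rw [gaussianPDF]
    apply ENNReal.ofReal_le_ofReal
    rw [gaussianPDFReal]
    calc (Real.sqrt (2 * π * v))⁻¹ * Real.exp (-(x - 0)^2 / (2*v))
        ≤ (Real.sqrt (2 * π * v))⁻¹ * 1 := by
          apply mul_le_mul_of_nonneg_left _ (by positivity)
          rw [← Real.exp_zero]
          apply Real.exp_le_exp.mpr
          apply div_nonpos_of_nonpos_of_nonneg (neg_nonpos.mpr (by positivity))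
          positivity
      _ = _ := mul_one _
  calc ∫⁻ x in Set.Icc (-a) a, gaussianPDF 0 v x
      ≤ ∫⁻ _ in Set.Icc (-a) a, ENNReal.ofReal ((Real.sqrt (2 * π * v))⁻¹) :=
        lintegral_mono fun x => hb x
    _ = ENNReal.ofReal ((Real.sqrt (2 * π * v))⁻¹) * volume (Set.Icc (-a) a) := by
        rw [setLIntegral_const]
    _ = ENNReal.ofReal (2 * a / Real.sqrt (2 * π * v)) := by
        rw [Real.volume_Icc, ← ENNReal.ofReal_mul (by positivity)]
        congr 1
        ring

/-- Paley–Wiener–Zygmund key estimate: with `c_π = 2¹⁰/π²`, for `λ > 0`, `n ∈ ℕ`,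
`P(∃ s ∈ [0,1] : sup_{t ∈ [s-2^{-n}, s+2^{-n}] ∩ [0,1]} |W(s)-W(t)|/2^{-n} ≤ λ)
  ≤ c_π·λ⁴·2^{-n}`. -/
theorem stmt18 {Ω : Type*} [MeasurableSpace Ω] (P : Measure Ω) [IsProbabilityMeasure P]
    (W : ℝ → Ω → ℝ) (hW : IsBrownianMotion P W)
    (lam : ℝ) (hlam : 0 < lam) (n : ℕ) :
    P {ω | ∃ s ∈ Set.Icc (0 : ℝ) 1,
        ∀ u ∈ Set.Icc (s - (2 : ℝ) ^ (-(n : ℤ))) (s + (2 : ℝ) ^ (-(n : ℤ))) ∩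
            Set.Icc (0 : ℝ) 1,
          |W s ω - W u ω| / (2 : ℝ) ^ (-(n : ℤ)) ≤ lam}
      ≤ ENNReal.ofReal ((2 ^ 10 / π ^ 2) * lam ^ 4 * (2 : ℝ) ^ (-(n : ℤ))) := by
  set h : ℝ := (2 : ℝ) ^ (-(n : ℤ)) with hh_def
  have hh : 0 < h := by positivity
  set N : ℝ := (2 : ℝ) ^ n with hN_def
  have hN : 0 < N := by positivity
  have hNh : h * N = 1 := by
    rw [hh_def, hN_def, ← zpow_natCast (2:ℝ) n, ← zpow_add₀ (two_ne_zero)]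
    norm_num
  set q : ℝ := h / 4 with hq_def
  have hq : 0 < q := by positivity
  set a : ℝ := 2 * lam * h with ha_def
  have ha : 0 < a := by positivity
  -- the dyadic times
  set tseq : ℕ → ℕ → ℝ := fun j i => (4 * j + i : ℕ) * q with ht_def
  have htmono : ∀ j, Monotone (tseq j) := by
    intro j i k hik
    simp only [ht_def]
    apply mul_le_mul_of_nonneg_right _ hq.le
    exact_mod_cast Nat.add_le_add_left hik _
  have htdiff : ∀ j i, tseq j (i + 1) - tseq j i = q := by
    intro j i
    simp only [ht_def]
    push_cast
    ring
  -- the events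
  set A : ℕ → Set Ω := fun j => ⋂ i : Fin 4,
    (fun ω => W (tseq j (i + 1)) ω - W (tseq j i) ω) ⁻¹' Set.Icc (-a) a with hA_def
  -- Step 1: inclusion
  have hincl : {ω | ∃ s ∈ Set.Icc (0 : ℝ) 1,
        ∀ u ∈ Set.Icc (s - h) (s + h) ∩ Set.Icc (0 : ℝ) 1,
          |W s ω - W u ω| / h ≤ lam} ⊆ ⋃ j ∈ Finset.range (2 ^ n), A j := by
    rintro ω ⟨s, ⟨hs0, hs1⟩, hsup⟩
    set j : ℕ := min ⌊s * N⌋₊ (2 ^ n - 1) with hj_def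
    have hjlt : j < 2 ^ n := lt_of_le_of_lt (min_le_right _ _)
      (Nat.sub_lt (by positivity) one_pos)
    have hjN : (j : ℝ) + 1 ≤ N := by
      have h1 : (j : ℝ) + 1 ≤ ((2 ^ n : ℕ) : ℝ) := by exact_mod_cast Nat.succ_le_of_lt hjlt
      calc (j : ℝ) + 1 ≤ ((2 ^ n : ℕ) : ℝ) := h1
        _ = N := by rw [hN_def]; push_cast; ring
    have hj1 : (j : ℝ) * h ≤ s := by
      have h1 : (j : ℝ) ≤ s * N := by
        calc (j : ℝ) ≤ ⌊s * N⌋₊ := by exact_mod_cast min_le_left _ _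
          _ ≤ s * N := Nat.floor_le (by positivity)
      calc (j : ℝ) * h ≤ (s * N) * h := mul_le_mul_of_nonneg_right h1 hh.le
        _ = s * (h * N) := by ring
        _ = s := by rw [hNh, mul_one]
    have hj2 : s ≤ ((j : ℝ) + 1) * h := by
      rcases le_or_gt ⌊s * N⌋₊ (2 ^ n - 1) with hc | hc
      · have hje : j = ⌊s * N⌋₊ := min_eq_left hc
        have h2 : s * N < (j : ℝ) + 1 := by
          rw [hje]; exact Nat.lt_floor_add_one _
        calc s = (s * N) * h := by
              rw [mul_assoc, mul_comm N h, hNh, mul_one]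
          _ ≤ ((j : ℝ) + 1) * h := mul_le_mul_of_nonneg_right h2.le hh.le
      · have hje : j = 2 ^ n - 1 := min_eq_right (le_of_lt hc)
        have h1 : (1:ℕ) ≤ 2 ^ n := Nat.one_le_two_pow
        have hcast : (j : ℝ) + 1 = N := by
          rw [hje, hN_def]
          push_cast [h1]
          ring
        rw [hcast]
        calc s ≤ 1 := hs1
          _ = h * N := hNh.symm
          _ ≤ N * h := by rw [mul_comm]
    have hmem : ∀ i : ℕ, i ≤ 4 → tseq j i ∈
        Set.Icc (s - h) (s + h) ∩ Set.Icc (0 : ℝ) 1 := by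
      intro i hi
      have hlo : (j : ℝ) * h ≤ tseq j i := by
        simp only [ht_def]
        have h2 : ((4 * j : ℕ) : ℝ) * q ≤ ((4 * j + i : ℕ) : ℝ) * q := by
          apply mul_le_mul_of_nonneg_right _ hq.le
          exact_mod_cast Nat.le_add_right _ _
        calc (j : ℝ) * h = ((4 * j : ℕ) : ℝ) * q := by push_cast [hq_def]; ring
          _ ≤ _ := h2
      have hhi : tseq j i ≤ ((j : ℝ) + 1) * h := by
        simp only [ht_def]
        have h2 : ((4 * j + i : ℕ) : ℝ) * q ≤ ((4 * j + 4 : ℕ) : ℝ) * q := by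
          apply mul_le_mul_of_nonneg_right _ hq.le
          exact_mod_cast Nat.add_le_add_left hi _
        calc ((4 * j + i : ℕ) : ℝ) * q ≤ ((4 * j + 4 : ℕ) : ℝ) * q := h2
          _ = ((j : ℝ) + 1) * h := by push_cast [hq_def]; ring
      refine ⟨⟨?_, ?_⟩, ?_, ?_⟩
      · linarith
      · linarith
      · have h3 : (0:ℝ) ≤ (j:ℝ) * h := by positivity
        linarith
      · calc tseq j i ≤ ((j : ℝ) + 1) * h := hhi
          _ ≤ N * h := mul_le_mul_of_nonneg_right hjN hh.le
          _ = 1 := by rw [mul_comm]; exact hNh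
    simp only [Set.mem_iUnion, Finset.mem_range]
    refine ⟨j, hjlt, ?_⟩
    rw [hA_def]
    simp only [Set.mem_iInter, Set.mem_preimage, Set.mem_Icc]
    intro i
    have hb : ∀ u ∈ Set.Icc (s - h) (s + h) ∩ Set.Icc (0 : ℝ) 1,
        |W s ω - W u ω| ≤ lam * h := by
      intro u hu
      have h4 := hsup u hu
      rwa [div_le_iff₀ hh] at h4
    have h0 := hb _ (hmem i (le_of_lt (Nat.lt_of_lt_of_le i.2 (by norm_num))))
    have h1 := hb _ (hmem (i + 1) (Nat.succ_le_of_lt (Nat.lt_of_lt_of_le i.2 (by norm_num))))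
    rw [abs_le] at h0 h1
    obtain ⟨h0a, h0b⟩ := h0
    obtain ⟨h1a, h1b⟩ := h1
    constructor
    · simp only [ha_def]; linarith
    · simp only [ha_def]; linarith
  -- Step 2: bound on each A j
  set b : ℝ := 2 * a / Real.sqrt (2 * π * q) with hb_def
  have hb0 : 0 ≤ b := by positivity
  have hAj : ∀ j, P (A j) ≤ ENNReal.ofReal b ^ 4 := by
    intro j
    have hindep := hW.indep_incr 4 (tseq j) (htmono j)
    have heq : P (A j) = ∏ i : Fin 4,
        P ((fun ω => W (tseq j (i + 1)) ω - W (tseq j i) ω) ⁻¹' Set.Icc (-a) a) := by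
      rw [hA_def]
      exact hindep.meas_iInter fun i => ⟨Set.Icc (-a) a, measurableSet_Icc, rfl⟩
    rw [heq]
    have hone : ∀ i : Fin 4,
        P ((fun ω => W (tseq j (i + 1)) ω - W (tseq j i) ω) ⁻¹' Set.Icc (-a) a)
          ≤ ENNReal.ofReal b := by
      intro i
      have hmeas : Measurable (fun ω => W (tseq j (i + 1)) ω - W (tseq j i) ω) :=
        (hW.meas _).sub (hW.meas _)
      rw [← Measure.map_apply hmeas measurableSet_Icc,
        hW.incr_law _ _ (htmono j (Nat.le_succ _)), htdiff j i]
      have hv : Real.toNNReal q ≠ 0 := by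
        simp [Real.toNNReal_eq_zero, not_le, hq]
      have h5 := gauss_bound (Real.toNNReal q) hv a
      rwa [Real.coe_toNNReal _ hq.le] at h5
    calc ∏ i : Fin 4, P _ ≤ ∏ _i : Fin 4, ENNReal.ofReal b :=
          Finset.prod_le_prod' fun i _ => hone i
      _ = ENNReal.ofReal b ^ 4 := by
          rw [Finset.prod_const, Finset.card_univ, Fintype.card_fin]
  -- Step 3: union bound and arithmetic
  calc P _ ≤ P (⋃ j ∈ Finset.range (2 ^ n), A j) := measure_mono hincl
    _ ≤ ∑ j ∈ Finset.range (2 ^ n), P (A j) := measure_biUnion_finset_le _ _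
    _ ≤ ∑ _j ∈ Finset.range (2 ^ n), ENNReal.ofReal b ^ 4 :=
        Finset.sum_le_sum fun j _ => hAj j
    _ = (2 ^ n : ℕ) * ENNReal.ofReal (b ^ 4) := by
        rw [Finset.sum_const, Finset.card_range, nsmul_eq_mul, ENNReal.ofReal_pow hb0]
    _ = ENNReal.ofReal (((2 ^ n : ℕ) : ℝ) * b ^ 4) := by
        rw [ENNReal.ofReal_mul (by positivity), ENNReal.ofReal_natCast]
    _ ≤ ENNReal.ofReal ((2 ^ 10 / π ^ 2) * lam ^ 4 * h) := by
        apply ENNReal.ofReal_le_ofReal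
        apply le_of_eq
        have hsq : Real.sqrt (2 * π * q) ^ 4 = (2 * π * q) ^ 2 := by
          have hnn : (0:ℝ) ≤ 2 * π * q := by positivity
          rw [show (4:ℕ) = 2 * 2 by norm_num, pow_mul, Real.sq_sqrt hnn]
        have hπ : π ≠ 0 := Real.pi_ne_zero
        have hN2 : ((2 ^ n : ℕ) : ℝ) = N := by rw [hN_def]; push_cast; ring
        have hNe : N = h⁻¹ := by
          field_simp
          linarith [hNh]
        rw [hb_def, div_pow, hsq, ha_def, hq_def, hN2, hNe]
        field_simp
        ring
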